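/- Suppose Ω ⊨ Obs and Ω ⊭ Obs ∪ {(σ, b)} for a new observation (σ, b). Then every counter-example (σ_N, P) to Ω ⊨ Obs ∪ {(σ,b)} involves σ: if b = −, then σ_N = σ and all P(Σ_i) lie in Dom(Obs); if b = +, then σ_N ∈ Dom(Obs) and σ is in the positive image of P, with all other entries of P in Dom(Obs). -/

import Mathlib

open Classical in
/-- Projection of a trace onto a sub-alphabet. -/
noncomputable def proj {A : Type*} (s : Set A) : List A → List A
  | [] => []
  | a :: σ => if a ∈ s then a :: proj s σ else proj s σ

/-- A distribution of the alphabet `A`: a family of sub-alphabets covering `A`. -/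
def AlphabetDistribution {A : Type*} (Ω : Set (Set A)) : Prop := ⋃₀ Ω = Set.univ

/-- A language agrees with an observation function (`L ⊨ Obs`). -/
def Agrees {A : Type*} (L : Set (List A)) (Obs : List A → Option Bool) : Prop :=
  ∀ σ b, Obs σ = some b → (σ ∈ L ↔ b = true)

/-- `L` is a product language over the distribution `Ω`: it is the parallel
composition of a family of languages over the component alphabets. -/
def ProductLang {A : Type*} (Ω : Set (Set A)) (L : Set (List A)) : Prop :=
  ∃ Ls : Set A → Set (List A),
    (∀ s ∈ Ω, ∀ σ ∈ Ls s, ∀ a ∈ σ, a ∈ s) ∧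
    L = {σ | ∀ s ∈ Ω, proj s σ ∈ Ls s}

/-- `Ω ⊨ Obs`: some product language over `Ω` agrees with `Obs`. -/
def Models {A : Type*} (Ω : Set (Set A)) (Obs : List A → Option Bool) : Prop :=
  ∃ L, ProductLang Ω L ∧ Agrees L Obs

/-- A counter-example to `Ω ⊨ Obs`: a negative observation `σN` together with,
for each component alphabet, a positive observation with matching projection. -/
def IsCED {A : Type*} (Ω : Set (Set A)) (Obs : List A → Option Bool)
    (σN : List A) (P : Set A → List A) : Prop :=
  Obs σN = some false ∧
  ∀ s ∈ Ω, Obs (P s) = some true ∧ proj s σN = proj s (P s)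

/-- The connectivity preorder: `Ω` is less connecting than `Ω'`. -/
def lessConn {A : Type*} (Ω Ω' : Set (Set A)) : Prop :=
  ∀ s ∈ Ω, ∃ t ∈ Ω', s ⊆ t

theorem models_no_ced {A : Type*} {Ω : Set (Set A)} {Obs : List A → Option Bool}
    (hmod : Models Ω Obs) (σN : List A) (P : Set A → List A) :
    ¬ IsCED Ω Obs σN P := by
  rintro ⟨hneg, hpos⟩
  obtain ⟨L, ⟨Ls, -, hL⟩, hAg⟩ := hmod
  have hσN : σN ∉ L := fun h => by simpa using (hAg σN false hneg).mp h
  apply hσN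
  rw [hL]
  intro s hs
  obtain ⟨hp, hproj⟩ := hpos s hs
  have : P s ∈ L := (hAg (P s) true hp).mpr rfl
  rw [hL] at this
  rw [hproj]
  exact this s hs

open Classical in
/-- Structure of counter-examples to the distribution after a global
counter-example `(σ, b)`: every counter-example to `Ω ⊨ Obs ∪ {(σ,b)}` involves
`σ`. If `b = −` then its negative trace is `σ` and all positive entries lie in
`Dom(Obs)`; if `b = +` then its negative trace lies in `Dom(Obs)` and `σ` occurs
in the positive image, all other entries lying in `Dom(Obs)`. -/
theorem global_cex_structure {A : Type*} (Ω : Set (Set A))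
    (hΩ : AlphabetDistribution Ω) (Obs : List A → Option Bool)
    (hfin : {τ | Obs τ ≠ none}.Finite) (hmod : Models Ω Obs)
    (σ : List A) (b : Bool) (hnew : Obs σ = none)
    (hnot : ¬ Models Ω (fun τ => if τ = σ then some b else Obs τ)) :
    ∀ (σN : List A) (P : Set A → List A),
      IsCED Ω (fun τ => if τ = σ then some b else Obs τ) σN P →
        (b = false → σN = σ ∧ ∀ s ∈ Ω, Obs (P s) = some true) ∧
        (b = true → Obs σN = some false ∧ (∃ s ∈ Ω, P s = σ) ∧
          ∀ s ∈ Ω, P s = σ ∨ Obs (P s) = some true) := by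
  intro σN P ⟨hneg, hpos⟩
  constructor
  · rintro rfl
    have hPs : ∀ s ∈ Ω, Obs (P s) = some true := by
      intro s hs
      have := (hpos s hs).1
      by_cases h : P s = σ <;> simp [h] at this ⊢
      exact this
    constructor
    · by_contra hne
      simp [hne] at hneg
      exact models_no_ced hmod σN P ⟨hneg, fun s hs => ⟨hPs s hs, (hpos s hs).2⟩⟩
    · exact hPs
  · rintro rfl
    have hne : σN ≠ σ := by rintro rfl; simp at hneg
    simp [hne] at hneg
    have hPs : ∀ s ∈ Ω, P s = σ ∨ Obs (P s) = some true := by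
      intro s hs
      have := (hpos s hs).1
      by_cases h : P s = σ <;> simp [h] at this ⊢
      exact this
    refine ⟨hneg, ?_, hPs⟩
    by_contra hno
    push_neg at hno
    refine models_no_ced hmod σN P ⟨hneg, fun s hs => ⟨?_, (hpos s hs).2⟩⟩
    rcases hPs s hs with h | h
    · exact absurd h (hno s hs)
    · exact h
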